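/- arXiv:0710.5854 — 6 statements merged into one kernel-verified Lean document; each statement's English description precedes it below -/
import Mathlib

section
/- Let P, Q, R be nonnegative m×m matrices with (P+Q+R)·1 = 1. Suppose there are ε > 0 and an integer l ≥ 1 with ‖R^l‖ ≤ 1 - ε, and every entry of (I-R)^{-1}P and of (I-R)^{-1}Q is at least ε. Then for any stochastic m×m matrix ψ, the norm ‖(I - R - Qψ)^{-1}‖ is bounded by a constant C depending only on ε, l, and m. -/
open Matrix BigOperators

/-- The maximum absolute row-sum norm of a matrix. -/
noncomputable def rowNorm {m : ℕ} (A : Matrix (Fin m) (Fin m) ℝ) : ℝ :=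
  ⨆ i, ∑ j, |A i j|

/-- A matrix is (row-)stochastic if its entries are nonnegative and each row
sums to `1`. -/
def IsStochastic {m : ℕ} (S : Matrix (Fin m) (Fin m) ℝ) : Prop :=
  (∀ i j, 0 ≤ S i j) ∧ S *ᵥ (fun _ => (1 : ℝ)) = fun _ => (1 : ℝ)

attribute [local instance] Matrix.linftyOpNormedRing Matrix.linftyOpNormedAlgebra

namespace StmtAux

lemma rowNorm_eq_norm {m : ℕ} [Nonempty (Fin m)] (A : Matrix (Fin m) (Fin m) ℝ) :
    rowNorm A = ‖A‖ := by
  rw [rowNorm, Matrix.linfty_opNorm_def]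
  have hcoe : ∀ i, ((∑ j, ‖A i j‖₊ : NNReal) : ℝ) = ∑ j, |A i j| := by
    intro i
    push_cast
    simp [Real.norm_eq_abs]
  apply le_antisymm
  · apply ciSup_le
    intro i
    rw [← hcoe i]
    exact NNReal.coe_mono (Finset.le_sup (f := fun i => ∑ j, ‖A i j‖₊) (Finset.mem_univ i))
  · obtain ⟨i, -, hi⟩ := Finset.exists_mem_eq_sup (Finset.univ : Finset (Fin m))
      Finset.univ_nonempty (fun i => ∑ j, ‖A i j‖₊)
    rw [hi, hcoe i]
    exact le_ciSup (f := fun i => ∑ j, |A i j|) (Set.Finite.bddAbove (Set.finite_range _)) i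

lemma norm_le_of_nonneg_rows {m : ℕ} [Nonempty (Fin m)] {A : Matrix (Fin m) (Fin m) ℝ} {c : ℝ}
    (h0 : ∀ i j, 0 ≤ A i j) (hc : ∀ i, ∑ j, A i j ≤ c) : ‖A‖ ≤ c := by
  rw [← rowNorm_eq_norm]
  apply ciSup_le
  intro i
  calc ∑ j, |A i j| = ∑ j, A i j := by
        exact Finset.sum_congr rfl fun j _ => abs_of_nonneg (h0 i j)
    _ ≤ c := hc i

lemma norm_inv_oneSub_le {m : ℕ} [Nonempty (Fin m)] {x : Matrix (Fin m) (Fin m) ℝ}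
    (h : ‖x‖ < 1) : ‖(↑(Units.oneSub x h)⁻¹ : Matrix (Fin m) (Fin m) ℝ)‖ ≤ (1 - ‖x‖)⁻¹ := by
  haveI : CompleteSpace (Matrix (Fin m) (Fin m) ℝ) := FiniteDimensional.complete ℝ _
  have := tsum_geometric_le_of_norm_lt_one x h
  have h1 : ‖(1 : Matrix (Fin m) (Fin m) ℝ)‖ = 1 := norm_one
  calc ‖(↑(Units.oneSub x h)⁻¹ : Matrix (Fin m) (Fin m) ℝ)‖
      = ‖∑' n : ℕ, x ^ n‖ := rfl
    _ ≤ ‖(1 : Matrix (Fin m) (Fin m) ℝ)‖ - 1 + (1 - ‖x‖)⁻¹ := this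
    _ = (1 - ‖x‖)⁻¹ := by rw [h1]; ring

lemma rowsum_eq_mulVec {m : ℕ} (A : Matrix (Fin m) (Fin m) ℝ) (i : Fin m) :
    (A *ᵥ (fun _ => (1 : ℝ))) i = ∑ j, A i j := by
  simp [Matrix.mulVec, dotProduct]

end StmtAux

open StmtAux

/-- Under Condition C2, the norm `‖(I - R - Qψ)⁻¹‖` is bounded by a constant
`C` depending only on `ε`, `l` and `m`, uniformly over stochastic `ψ`. -/
theorem stmt_2 (m l : ℕ) (hl : 1 ≤ l) (ε : ℝ) (hε : 0 < ε) :
    ∃ C : ℝ, 0 < C ∧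
      ∀ P Q R : Matrix (Fin m) (Fin m) ℝ,
        (∀ i j, 0 ≤ P i j) → (∀ i j, 0 ≤ Q i j) → (∀ i j, 0 ≤ R i j) →
        ((P + Q + R) *ᵥ (fun _ => (1 : ℝ)) = fun _ => (1 : ℝ)) →
        rowNorm (R ^ l) ≤ 1 - ε →
        (∀ i j, ε ≤ ((1 - R)⁻¹ * P) i j) →
        (∀ i j, ε ≤ ((1 - R)⁻¹ * Q) i j) →
        ∀ ψ : Matrix (Fin m) (Fin m) ℝ, IsStochastic ψ →
          rowNorm (1 - R - Q * ψ)⁻¹ ≤ C := by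
  rcases Nat.eq_zero_or_pos m with hm | hm
  · subst hm
    refine ⟨1, one_pos, ?_⟩
    intro P Q R _ _ _ _ _ _ _ ψ _
    rw [rowNorm, Real.iSup_of_isEmpty]
    exact zero_le_one
  haveI : Nonempty (Fin m) := ⟨⟨0, hm⟩⟩
  haveI : CompleteSpace (Matrix (Fin m) (Fin m) ℝ) := FiniteDimensional.complete ℝ _
  have hm1 : (1 : ℝ) ≤ (m : ℝ) := by exact_mod_cast hm
  refine ⟨((m : ℝ) * ε)⁻¹ * ((l : ℝ) * ε⁻¹), by positivity, ?_⟩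
  intro P Q R hP hQ hR hsum hRl hWP hWQ ψ hψ
  -- row sums of P+Q+R are 1
  have hrows : ∀ i, ∑ j, P i j + ∑ j, Q i j + ∑ j, R i j = 1 := by
    intro i
    have := congrFun hsum i
    rw [rowsum_eq_mulVec] at this
    simpa [Finset.sum_add_distrib] using this
  -- ‖R‖ ≤ 1
  have hRnorm : ‖R‖ ≤ 1 := by
    apply norm_le_of_nonneg_rows hR
    intro i
    have hPn : 0 ≤ ∑ j, P i j := Finset.sum_nonneg fun j _ => hP i j
    have hQn : 0 ≤ ∑ j, Q i j := Finset.sum_nonneg fun j _ => hQ i j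
    have := hrows i
    linarith
  -- ‖R^l‖ ≤ 1 - ε
  have hRl' : ‖R ^ l‖ ≤ 1 - ε := by rwa [← rowNorm_eq_norm]
  have hRllt : ‖R ^ l‖ < 1 := lt_of_le_of_lt hRl' (by linarith)
  -- the geometric sum S
  set S : Matrix (Fin m) (Fin m) ℝ := ∑ i ∈ Finset.range l, R ^ i with hSdef
  have hS1 : (1 - R) * S = 1 - R ^ l := mul_neg_geom_sum R l
  have hS2 : S * (1 - R) = 1 - R ^ l := geom_sum_mul_neg R l
  have hSnorm : ‖S‖ ≤ (l : ℝ) := by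
    calc ‖S‖ ≤ ∑ i ∈ Finset.range l, ‖R ^ i‖ := norm_sum_le _ _
      _ ≤ ∑ _i ∈ Finset.range l, (1 : ℝ) := by
          apply Finset.sum_le_sum
          intro i _
          calc ‖R ^ i‖ ≤ ‖R‖ ^ i := norm_pow_le R i
            _ ≤ 1 := pow_le_one₀ (norm_nonneg _) hRnorm
      _ = (l : ℝ) := by simp
  -- unit for 1 - R^l
  set u : (Matrix (Fin m) (Fin m) ℝ)ˣ := Units.oneSub (R ^ l) hRllt with hudef
  have huval : (u : Matrix (Fin m) (Fin m) ℝ) = 1 - R ^ l := rfl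
  have hunorm : ‖(↑u⁻¹ : Matrix (Fin m) (Fin m) ℝ)‖ ≤ ε⁻¹ := by
    calc ‖(↑u⁻¹ : Matrix (Fin m) (Fin m) ℝ)‖ ≤ (1 - ‖R ^ l‖)⁻¹ := norm_inv_oneSub_le hRllt
      _ ≤ ε⁻¹ := by
          apply inv_anti₀ hε
          linarith
  -- 1 - R is invertible, with inverse S * u⁻¹
  set W' : Matrix (Fin m) (Fin m) ℝ := S * (↑u⁻¹ : Matrix (Fin m) (Fin m) ℝ) with hW'def
  have hcomm : Commute (1 - R) (↑u : Matrix (Fin m) (Fin m) ℝ) := by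
    rw [huval]
    have h1 : Commute (1 - R) (R ^ l) :=
      (Commute.one_left (R ^ l)).sub_left ((Commute.refl R).pow_right l)
    exact (Commute.one_right (1 - R)).sub_right h1
  have hcomm' : Commute (1 - R) (↑u⁻¹ : Matrix (Fin m) (Fin m) ℝ) := hcomm.units_inv_right
  have hright : (1 - R) * W' = 1 := by
    rw [hW'def, ← mul_assoc, hS1, ← huval, u.mul_inv]
  have hleft : W' * (1 - R) = 1 := by
    rw [hW'def, mul_assoc, ← hcomm'.eq, ← mul_assoc, hS2, ← huval]; exact u.mul_inv
  have hWeq : (1 - R)⁻¹ = W' := Matrix.inv_eq_right_inv hright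
  have hunit : IsUnit ((1 - R).det) := by
    apply Matrix.isUnit_iff_isUnit_det _ |>.mp
    exact ⟨⟨1 - R, W', hright, hleft⟩, rfl⟩
  have hWnorm : ‖(1 - R)⁻¹‖ ≤ (l : ℝ) * ε⁻¹ := by
    rw [hWeq, hW'def]
    calc ‖S * (↑u⁻¹ : Matrix (Fin m) (Fin m) ℝ)‖ ≤ ‖S‖ * ‖(↑u⁻¹ : Matrix (Fin m) (Fin m) ℝ)‖ :=
          norm_mul_le _ _
      _ ≤ (l : ℝ) * ε⁻¹ := by
          apply mul_le_mul hSnorm hunorm (norm_nonneg _) (Nat.cast_nonneg l)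
  set W : Matrix (Fin m) (Fin m) ℝ := (1 - R)⁻¹ with hWdef2
  -- row sums of W*(P+Q) are 1
  have hWPQ : ∀ i, ∑ j, (W * P) i j + ∑ j, (W * Q) i j = 1 := by
    intro i
    have hPQ1 : (P + Q) *ᵥ (fun _ => (1 : ℝ)) = (1 - R) *ᵥ (fun _ => (1 : ℝ)) := by
      funext k
      have h1 := congrFun hsum k
      rw [rowsum_eq_mulVec] at h1
      rw [rowsum_eq_mulVec, rowsum_eq_mulVec]
      simp only [Matrix.add_apply, Matrix.sub_apply, Matrix.one_apply,
        Finset.sum_add_distrib] at h1 ⊢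
      rw [Finset.sum_sub_distrib]
      simp only [Finset.sum_ite_eq, Finset.mem_univ, if_true]
      linarith
    have h2 : (W * (P + Q)) *ᵥ (fun _ => (1 : ℝ)) = (fun _ => (1 : ℝ)) := by
      rw [← Matrix.mulVec_mulVec, hPQ1, Matrix.mulVec_mulVec,
        Matrix.nonsing_inv_mul _ hunit, Matrix.one_mulVec]
    have h3 := congrFun h2 i
    rw [rowsum_eq_mulVec] at h3
    rw [mul_add] at h3
    simpa [Matrix.add_apply, Finset.sum_add_distrib] using h3
  -- row sums of B := W * Q are at most 1 - m ε
  have hBrow : ∀ i, ∑ j, (W * Q) i j ≤ 1 - (m : ℝ) * ε := by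
    intro i
    have h1 : (m : ℝ) * ε ≤ ∑ j, (W * P) i j := by
      calc (m : ℝ) * ε = ∑ _j : Fin m, ε := by
            rw [Finset.sum_const, Finset.card_univ, Fintype.card_fin, nsmul_eq_mul]
        _ ≤ ∑ j, (W * P) i j := Finset.sum_le_sum fun j _ => hWP i j
    have := hWPQ i
    linarith
  obtain ⟨hψ0, hψ1⟩ := hψ
  -- bound on ‖W * Q * ψ‖
  have hB0 : ∀ i j, 0 ≤ (W * Q) i j := fun i j => le_trans hε.le (hWQ i j)
  have hBψ0 : ∀ i j, 0 ≤ (W * Q * ψ) i j := by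
    intro i j
    rw [Matrix.mul_apply]
    exact Finset.sum_nonneg fun k _ => mul_nonneg (hB0 i k) (hψ0 k j)
  have hBψrow : ∀ i, ∑ j, (W * Q * ψ) i j ≤ 1 - (m : ℝ) * ε := by
    intro i
    have h1 : (W * Q * ψ) *ᵥ (fun _ => (1 : ℝ)) = (W * Q) *ᵥ (fun _ => (1 : ℝ)) := by
      rw [← Matrix.mulVec_mulVec, hψ1]
    have h2 := congrFun h1 i
    rw [rowsum_eq_mulVec, rowsum_eq_mulVec] at h2
    rw [h2]
    exact hBrow i
  have hBψnorm : ‖W * Q * ψ‖ ≤ 1 - (m : ℝ) * ε := norm_le_of_nonneg_rows hBψ0 hBψrow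
  have hmε : 0 < (m : ℝ) * ε := by positivity
  have hBψlt : ‖W * Q * ψ‖ < 1 := lt_of_le_of_lt hBψnorm (by linarith)
  set v : (Matrix (Fin m) (Fin m) ℝ)ˣ := Units.oneSub (W * Q * ψ) hBψlt with hvdef
  have hvnorm : ‖(↑v⁻¹ : Matrix (Fin m) (Fin m) ℝ)‖ ≤ ((m : ℝ) * ε)⁻¹ := by
    calc ‖(↑v⁻¹ : Matrix (Fin m) (Fin m) ℝ)‖ ≤ (1 - ‖W * Q * ψ‖)⁻¹ := norm_inv_oneSub_le hBψlt
      _ ≤ ((m : ℝ) * ε)⁻¹ := by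
          apply inv_anti₀ hmε
          linarith
  -- factorization
  have hfact : (1 : Matrix (Fin m) (Fin m) ℝ) - R - Q * ψ = (1 - R) * (1 - W * Q * ψ) := by
    have h1 : (1 - R) * (W * Q * ψ) = Q * ψ := by
      rw [hWdef2, mul_assoc ((1 : Matrix (Fin m) (Fin m) ℝ) - R)⁻¹ Q ψ, ← mul_assoc,
        Matrix.mul_nonsing_inv _ hunit, one_mul]
    rw [mul_sub, mul_one, h1, sub_sub]
  have hvinv : (1 - W * Q * ψ)⁻¹ = (↑v⁻¹ : Matrix (Fin m) (Fin m) ℝ) :=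
    Matrix.inv_eq_right_inv v.mul_inv
  rw [hfact, Matrix.mul_inv_rev, hvinv, rowNorm_eq_norm]
  calc ‖(↑v⁻¹ : Matrix (Fin m) (Fin m) ℝ) * (1 - R)⁻¹‖
      ≤ ‖(↑v⁻¹ : Matrix (Fin m) (Fin m) ℝ)‖ * ‖(1 - R)⁻¹‖ := norm_mul_le _ _
    _ ≤ ((m : ℝ) * ε)⁻¹ * ((l : ℝ) * ε⁻¹) :=
        mul_le_mul hvnorm hWnorm (norm_nonneg _) (by positivity)
end

section
/- Let (X, r) be a compact metric space, let (b_n) and (b_n') be sequences of self-maps of X such that each b_n is a c-contraction for a fixed 0 ≤ c < 1 (r(b_n(x), b_n(y)) ≤ c·r(x,y) for all x,y), and suppose ρ̄(b_n, b_n') := sup_x r(b_n(x), b_n'(x)) → 0 as n → ∞. Define x_{n+1} = b_n(x_n) and x_{n+1}' = b_n'(x_n') from arbitrary initial points x_1, x_1'. Then r(x_n, x_n') → 0 as n → ∞. -/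
open Filter

/-- Stability of orbits of uniformly contracting maps on a compact metric
space under perturbations that vanish in the uniform distance. -/
theorem stmt_7 {X : Type*} [MetricSpace X] [CompactSpace X]
    (c : ℝ) (hc0 : 0 ≤ c) (hc1 : c < 1)
    (b b' : ℕ → X → X)
    (hb : ∀ n x y, dist (b n x) (b n y) ≤ c * dist x y)
    (hρ : Tendsto (fun n => ⨆ x, dist (b n x) (b' n x)) atTop (nhds 0))
    (x x' : ℕ → X)
    (hx : ∀ n, 1 ≤ n → x (n + 1) = b n (x n))
    (hx' : ∀ n, 1 ≤ n → x' (n + 1) = b' n (x' n)) :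
    Tendsto (fun n => dist (x n) (x' n)) atTop (nhds 0) := by
  have hne : Nonempty X := ⟨x 0⟩
  set ρ : ℕ → ℝ := fun n => ⨆ y, dist (b n y) (b' n y) with hρdef
  set d : ℕ → ℝ := fun n => dist (x n) (x' n) with hddef
  -- boundedness of X
  obtain ⟨C, hC⟩ := Metric.isBounded_iff.1 (isCompact_univ (X := X)).isBounded
  have hbdd : ∀ n, BddAbove (Set.range fun y => dist (b n y) (b' n y)) := by
    intro n
    exact ⟨C, by rintro _ ⟨y, rfl⟩; exact hC trivial trivial⟩
  have hρle : ∀ n y, dist (b n y) (b' n y) ≤ ρ n := fun n y => le_ciSup (hbdd n) y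
  -- key recursion
  have hrec : ∀ n, 1 ≤ n → d (n + 1) ≤ c * d n + ρ n := by
    intro n hn
    have h1 : d (n + 1) = dist (b n (x n)) (b' n (x' n)) := by
      simp [hddef, hx n hn, hx' n hn]
    calc d (n + 1) = dist (b n (x n)) (b' n (x' n)) := h1
      _ ≤ dist (b n (x n)) (b n (x' n)) + dist (b n (x' n)) (b' n (x' n)) :=
        dist_triangle _ _ _
      _ ≤ c * d n + ρ n := add_le_add (hb n _ _) (hρle n _)
  rw [Metric.tendsto_atTop]
  intro ε hε
  -- choose N₁ with ρ n < ε (1 - c) / 2 for n ≥ N₁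
  have h1c : 0 < 1 - c := by linarith
  have hε' : 0 < ε * (1 - c) / 2 := by positivity
  obtain ⟨N₀, hN₀⟩ := (Metric.tendsto_atTop.1 hρ) (ε * (1 - c) / 2) hε'
  set N₁ := max N₀ 1 with hN₁def
  have hN₁1 : 1 ≤ N₁ := le_max_right _ _
  have hρsmall : ∀ n, N₁ ≤ n → ρ n ≤ ε * (1 - c) / 2 := by
    intro n hn
    have := hN₀ n (le_trans (le_max_left _ _) hn)
    rw [Real.dist_eq, sub_zero] at this
    exact (le_abs_self _).trans this.le
  -- inductive bound
  have hind : ∀ k, d (N₁ + k) ≤ c ^ k * d N₁ + ε / 2 := by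
    intro k
    induction k with
    | zero => simp; nlinarith
    | succ k ih =>
      have h1 : d (N₁ + k + 1) ≤ c * d (N₁ + k) + ρ (N₁ + k) :=
        hrec _ (le_trans hN₁1 (Nat.le_add_right _ _))
      have h2 : ρ (N₁ + k) ≤ ε * (1 - c) / 2 := hρsmall _ (Nat.le_add_right _ _)
      have h3 : c * d (N₁ + k) ≤ c * (c ^ k * d N₁ + ε / 2) :=
        mul_le_mul_of_nonneg_left ih hc0
      have : d (N₁ + (k + 1)) ≤ c * (c ^ k * d N₁ + ε / 2) + ε * (1 - c) / 2 := by
        have heq : N₁ + (k + 1) = N₁ + k + 1 := by ring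
        rw [heq]; linarith
      calc d (N₁ + (k + 1)) ≤ c * (c ^ k * d N₁ + ε / 2) + ε * (1 - c) / 2 := this
        _ = c ^ (k + 1) * d N₁ + (c * ε / 2 + ε * (1 - c) / 2) := by ring
        _ ≤ c ^ (k + 1) * d N₁ + ε / 2 := by nlinarith
  -- choose K with c^K * d N₁ < ε/2
  have hd0 : 0 ≤ d N₁ := dist_nonneg
  have hpow : Tendsto (fun k => c ^ k * d N₁) atTop (nhds 0) := by
    simpa using (tendsto_pow_atTop_nhds_zero_of_lt_one hc0 hc1).mul_const (d N₁)
  obtain ⟨K, hK⟩ := (Metric.tendsto_atTop.1 hpow) (ε / 2) (by positivity)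
  have hKlt : c ^ K * d N₁ < ε / 2 := by
    have := hK K le_rfl
    rw [Real.dist_eq, sub_zero] at this
    exact (le_abs_self _).trans_lt this
  refine ⟨N₁ + K, fun n hn => ?_⟩
  obtain ⟨m, rfl⟩ := Nat.exists_eq_add_of_le hn
  have hKm : K ≤ K + m := Nat.le_add_right _ _
  have hcmono : c ^ (K + m) ≤ c ^ K := pow_le_pow_of_le_one hc0 hc1.le hKm
  have h1 : d (N₁ + (K + m)) ≤ c ^ (K + m) * d N₁ + ε / 2 := hind (K + m)
  have h2 : c ^ (K + m) * d N₁ ≤ c ^ K * d N₁ := mul_le_mul_of_nonneg_right hcmono hd0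
  have hdnn : 0 ≤ d (N₁ + (K + m)) := dist_nonneg
  have heq2 : N₁ + K + m = N₁ + (K + m) := by ring
  rw [Real.dist_eq, sub_zero, heq2, abs_of_nonneg hdnn]
  linarith
end

section
/- Let (X, r) be a metric space with bounded diameter, (b_n), (b_n') sequences of c-contractions of X with 0 ≤ c < 1, and suppose ρ̄(b_n, b_n') ≤ C₂ c₀^n ρ̄(b_1, b_1') for some C₂ > 0 and 0 ≤ c₀ < 1. Let x_{n+1} = b_n(x_n), x_{n+1}' = b_n'(x_n'). Then for every ε > 0 there is a constant C₃ such that r(x_n, x_n') ≤ C₃ (max(c, c₀) + ε)^n (ρ̄(b_1, b_1') + r(x_1, x_1')) for all n. -/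
open Filter

/-- Quantitative stability: if the perturbations decay geometrically, so does
the distance between the two orbits, at rate `max(c, c₀) + ε`. -/
theorem stmt_8 {X : Type*} [MetricSpace X]
    (hbdd : ∃ D : ℝ, ∀ x y : X, dist x y ≤ D)
    (c c₀ : ℝ) (hc0 : 0 ≤ c) (hc1 : c < 1) (hc₀0 : 0 ≤ c₀) (hc₀1 : c₀ < 1)
    (C₂ : ℝ) (hC₂ : 0 < C₂)
    (b b' : ℕ → X → X)
    (hb : ∀ n x y, dist (b n x) (b n y) ≤ c * dist x y)
    (hb' : ∀ n x y, dist (b' n x) (b' n y) ≤ c * dist x y)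
    (hρ : ∀ n, (⨆ z, dist (b n z) (b' n z)) ≤
      C₂ * c₀ ^ n * ⨆ z, dist (b 1 z) (b' 1 z))
    (x x' : ℕ → X)
    (hx : ∀ n, 1 ≤ n → x (n + 1) = b n (x n))
    (hx' : ∀ n, 1 ≤ n → x' (n + 1) = b' n (x' n)) :
    ∀ ε > (0 : ℝ), ∃ C₃ : ℝ, ∀ n, 1 ≤ n →
      dist (x n) (x' n) ≤ C₃ * (max c c₀ + ε) ^ n *
        ((⨆ z, dist (b 1 z) (b' 1 z)) + dist (x 1) (x' 1)) := by
  intro ε hε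
  obtain ⟨D, hD⟩ := hbdd
  set q : ℝ := max c c₀ + ε with hqdef
  have hcq : c + ε ≤ q := add_le_add_left (le_max_left _ _) _
  have hc₀q : c₀ ≤ q := (le_max_right c c₀).trans (le_add_of_nonneg_right hε.le)
  have hq0 : 0 < q := lt_of_lt_of_le (by linarith) hcq
  set K : ℝ := max (C₂ / ε) (1 / ε) with hKdef
  have hK1 : C₂ / ε ≤ K := le_max_left _ _
  have hK2 : 1 / ε ≤ K := le_max_right _ _
  have hK0 : 0 < K := lt_of_lt_of_le (by positivity) hK2
  have hKq1 : 1 ≤ K * q := by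
    have h1 : 1 / ε * ε ≤ K * q :=
      mul_le_mul hK2 (le_trans (by linarith) hcq) hε.le hK0.le
    rw [one_div, inv_mul_cancel₀ hε.ne'] at h1
    exact h1
  have hKεC : C₂ ≤ K * ε := by
    have := (div_le_iff₀ hε).mp hK1
    linarith
  refine ⟨K, ?_⟩
  set ρ₁ : ℝ := ⨆ z, dist (b 1 z) (b' 1 z) with hρ₁def
  set S : ℝ := ρ₁ + dist (x 1) (x' 1) with hSdef
  have hρ₁0 : 0 ≤ ρ₁ := Real.iSup_nonneg fun z => dist_nonneg
  have hS0 : 0 ≤ S := add_nonneg hρ₁0 dist_nonneg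
  have hbdd' : ∀ n, BddAbove (Set.range fun z => dist (b n z) (b' n z)) := by
    intro n
    refine ⟨D, ?_⟩
    rintro _ ⟨z, rfl⟩
    exact hD _ _
  intro n hn
  induction n with
  | zero => omega
  | succ n ih =>
    rcases Nat.lt_or_ge n 1 with h | hn1
    · -- base case: n = 0
      interval_cases n
      have h1 : dist (x 1) (x' 1) ≤ S := by
        simp only [hSdef]; linarith
      have h2 : S ≤ K * q ^ 1 * S := by nlinarith
      exact h1.trans h2
    · have ihn := ih hn1
      have hq_pow : (0:ℝ) ≤ q ^ n := pow_nonneg hq0.le n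
      have hc₀_pow : c₀ ^ n ≤ q ^ n := pow_le_pow_left₀ hc₀0 hc₀q n
      rw [hx n hn1, hx' n hn1]
      calc dist (b n (x n)) (b' n (x' n))
          ≤ dist (b n (x n)) (b n (x' n)) + dist (b n (x' n)) (b' n (x' n)) :=
            dist_triangle _ _ _
        _ ≤ c * dist (x n) (x' n) + ⨆ z, dist (b n z) (b' n z) :=
            add_le_add (hb n _ _) (le_ciSup (hbdd' n) (x' n))
        _ ≤ c * (K * q ^ n * S) + C₂ * c₀ ^ n * ρ₁ :=
            add_le_add (mul_le_mul_of_nonneg_left ihn hc0) (hρ n)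
        _ ≤ K * q ^ (n + 1) * S := by
            have hρS : ρ₁ ≤ S := by
              simp only [hSdef]
              nlinarith [dist_nonneg (x := x 1) (y := x' 1)]
            have h1 : C₂ * c₀ ^ n * ρ₁ ≤ C₂ * q ^ n * S :=
              mul_le_mul (mul_le_mul_of_nonneg_left hc₀_pow hC₂.le) hρS hρ₁0
                (mul_nonneg hC₂.le hq_pow)
            have h2 : c * (K * q ^ n * S) + C₂ * q ^ n * S ≤ K * q ^ (n + 1) * S := by
              rw [pow_succ]
              have hkey : c * K + C₂ ≤ K * q := by nlinarith
              have h3 := mul_le_mul_of_nonneg_right hkey (mul_nonneg hq_pow hS0)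
              nlinarith [h3]
            linarith
end

section
/- Let (g_k)_{k≥1} be an i.i.d. sequence of random continuous self-maps of a compact metric space M with distribution μ, generating the Markov chain y_{k+1} = g_k · y_k with unique invariant probability measure ν. Suppose the contraction property holds: there exist C > 0 and 0 ≤ c < 1 with E[ρ(g_n⋯g_1·y, g_n⋯g_1·y')] ≤ C c^n for all y, y' ∈ M and n ≥ 1. Let A be the Markov operator (A F)(g, z) = ∫ F(g', g·z) μ(dg'). If f is a bounded continuous function on supp(μ) × M such that y ↦ ∫ f(g, y) μ(dg) is Lipschitz and ∫∫ f dμ dν = 0, then the series F = ∑_{k≥0} A^k f converges uniformly to a continuous function solving (I - A)F = f with ∫∫ F dμ dν = 0. -/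
open MeasureTheory Filter BigOperators Topology

/-- The Markov operator `(A F)(g, z) = ∫ F(g', g·z) μ(dg')` associated with an
i.i.d. sequence of random continuous self-maps with common law `μ`. -/
noncomputable def Aop {M : Type*} [TopologicalSpace M]
    [MeasurableSpace C(M, M)] (μ : Measure C(M, M))
    (F : C(M, M) × M → ℝ) : C(M, M) × M → ℝ :=
  fun p => ∫ g', F (g', p.1 p.2) ∂μ

/-- Application of a tuple of maps: `g_n ⋯ g_1 · y` (apply `gs 0` first). -/
def applyTuple {M : Type*} [TopologicalSpace M] {n : ℕ}
    (gs : Fin n → C(M, M)) (y : M) : M :=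
  (List.ofFn gs).foldl (fun x g => g x) y

lemma integrable_of_bdd {α : Type*} [MeasurableSpace α] {m : Measure α}
    [IsFiniteMeasure m] {φ : α → ℝ} (hm : AEStronglyMeasurable φ m) {B : ℝ}
    (hb : ∀ x, ‖φ x‖ ≤ B) : Integrable φ m :=
  ⟨hm, HasFiniteIntegral.of_bounded (Filter.Eventually.of_forall hb)⟩

section Aux
set_option linter.unusedSectionVars false
set_option linter.deprecated false
variable {M : Type*} [MetricSpace M] [CompactSpace M] [Nonempty M]

lemma applyTuple_zero (gs : Fin 0 → C(M,M)) (y : M) : applyTuple gs y = y := by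
  simp [applyTuple]

lemma applyTuple_succ {n : ℕ} (gs : Fin (n+1) → C(M,M)) (y : M) :
    applyTuple gs y = applyTuple (Fin.tail gs) (gs 0 y) := by
  simp only [applyTuple, List.ofFn_succ, List.foldl_cons]
  rfl

lemma continuous_applyTuple (n : ℕ) :
    Continuous fun p : (Fin n → C(M,M)) × M => applyTuple p.1 p.2 := by
  induction n with
  | zero => simpa [applyTuple_zero] using continuous_snd
  | succ n ih =>
      have he : (fun p : (Fin (n+1) → C(M,M)) × M => applyTuple p.1 p.2)
          = fun p => applyTuple (Fin.tail p.1) (p.1 0 p.2) :=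
        funext fun p => applyTuple_succ p.1 p.2
      rw [he]
      have h1 : Continuous fun p : (Fin (n+1) → C(M,M)) × M => Fin.tail p.1 :=
        continuous_pi fun i => (continuous_apply i.succ).comp continuous_fst
      have h2 : Continuous fun p : (Fin (n+1) → C(M,M)) × M => p.1 0 p.2 :=
        ContinuousEval.continuous_eval.comp
          (((continuous_apply 0).comp continuous_fst).prodMk continuous_snd)
      exact ih.comp (h1.prodMk h2)

variable [MeasurableSpace M] [BorelSpace M]
  [MeasurableSpace C(M, M)] [BorelSpace C(M, M)]
  (μ : Measure C(M, M)) [IsProbabilityMeasure μ]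

/-- `Gseq μ h k` is `Aᵏ` applied to the fiber average `h`. -/
noncomputable def Gseq (h : M → ℝ) : ℕ → M → ℝ
  | 0 => h
  | k+1 => fun y => ∫ g, Gseq h k (g y) ∂μ

lemma Gseq_cont_bdd {h : M → ℝ} (hhc : Continuous h) {K : ℝ}
    (hKb : ∀ y, |h y| ≤ K) (k : ℕ) :
    Continuous (Gseq μ h k) ∧ ∀ y, |Gseq μ h k y| ≤ K := by
  induction k with
  | zero => exact ⟨hhc, hKb⟩
  | succ k ih =>
    refine ⟨?_, ?_⟩
    · apply continuous_of_dominated (bound := fun _ => K)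
      · intro y
        exact (ih.1.comp (continuous_eval_const y)).aestronglyMeasurable
      · intro y
        exact Filter.Eventually.of_forall fun g => by
          simpa [Real.norm_eq_abs] using ih.2 (g y)
      · exact integrable_const K
      · exact Filter.Eventually.of_forall fun g => ih.1.comp g.continuous
    · intro y
      have : ‖∫ g, Gseq μ h k (g y) ∂μ‖ ≤ K * (μ Set.univ).toReal :=
        norm_integral_le_of_norm_le_const
          (Filter.Eventually.of_forall fun g => by
            simpa [Real.norm_eq_abs] using ih.2 (g y))
      simpa [Gseq, Real.norm_eq_abs] using this

/-- Expected contraction distance after `k` steps. -/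
noncomputable def Dfun (k : ℕ) (y y' : M) : ℝ :=
  ∫ gs : Fin k → C(M,M), dist (applyTuple gs y) (applyTuple gs y')
    ∂(Measure.pi fun _ => μ)

lemma Dfun_zero (y y' : M) : Dfun μ 0 y y' = dist y y' := by
  simp [Dfun, applyTuple_zero]

lemma Dfun_nonneg (k : ℕ) (y y' : M) : 0 ≤ Dfun μ k y y' :=
  integral_nonneg fun _ => dist_nonneg

lemma dist_le_diam (a b : M) : dist a b ≤ Metric.diam (Set.univ : Set M) :=
  Metric.dist_le_diam_of_mem isCompact_univ.isBounded trivial trivial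

lemma Dfun_le_diam (k : ℕ) (y y' : M) :
    Dfun μ k y y' ≤ Metric.diam (Set.univ : Set M) := by
  have : ‖Dfun μ k y y'‖ ≤ Metric.diam (Set.univ : Set M) *
      ((Measure.pi fun _ : Fin k => μ) Set.univ).toReal :=
    norm_integral_le_of_norm_le_const (Filter.Eventually.of_forall fun gs => by
      simpa [Real.norm_eq_abs, abs_of_nonneg dist_nonneg] using dist_le_diam _ _)
  rw [measure_univ] at this
  simpa using (le_trans (le_abs_self _) (by simpa [Real.norm_eq_abs] using this))

lemma continuous_distApply (k : ℕ) {y y' : M} :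
    Continuous fun gs : Fin k → C(M,M) =>
      dist (applyTuple gs y) (applyTuple gs y') :=
  Continuous.dist
    ((continuous_applyTuple k).comp (continuous_id.prodMk continuous_const))
    ((continuous_applyTuple k).comp (continuous_id.prodMk continuous_const))

lemma Dfun_cont (k : ℕ) : Continuous fun q : M × M => Dfun μ k q.1 q.2 := by
  apply continuous_of_dominated (bound := fun _ => Metric.diam (Set.univ : Set M))
  · intro q
    exact (continuous_distApply k).aestronglyMeasurable
  · intro q
    exact Filter.Eventually.of_forall fun gs => by
      simpa [Real.norm_eq_abs, abs_of_nonneg dist_nonneg] using dist_le_diam _ _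
  · exact integrable_const _
  · refine Filter.Eventually.of_forall fun gs => ?_
    exact Continuous.dist
      ((continuous_applyTuple k).comp (continuous_const.prodMk continuous_fst))
      ((continuous_applyTuple k).comp (continuous_const.prodMk continuous_snd))

lemma Dfun_succ (k : ℕ) (y y' : M) :
    Dfun μ (k+1) y y' = ∫ g, Dfun μ k (g y) (g y') ∂μ := by
  classical
  set e := MeasurableEquiv.piFinSuccAbove (fun _ : Fin (k+1) => C(M,M)) 0 with he
  have hmp : MeasurePreserving e (Measure.pi fun _ => μ)
      (μ.prod (Measure.pi fun _ => μ)) :=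
    measurePreserving_piFinSuccAbove (fun _ => μ) 0
  set ψ : C(M,M) × (Fin k → C(M,M)) → ℝ := fun q =>
    dist (applyTuple q.2 (q.1 y)) (applyTuple q.2 (q.1 y')) with hψ
  have hcomp : ∀ gs : Fin (k+1) → C(M,M),
      ψ (e gs) = dist (applyTuple gs y) (applyTuple gs y') := by
    intro gs
    have h0 : e gs = (gs 0, Fin.tail gs) := by
      simp only [he, MeasurableEquiv.piFinSuccAbove]
      rfl
    rw [h0, hψ]
    simp [← applyTuple_succ]
  have hψc : Continuous ψ := by
    apply Continuous.dist
    · exact (continuous_applyTuple k).comp (continuous_snd.prodMk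
        ((continuous_eval_const y).comp continuous_fst))
    · exact (continuous_applyTuple k).comp (continuous_snd.prodMk
        ((continuous_eval_const y').comp continuous_fst))
  have hψi : Integrable ψ (μ.prod (Measure.pi fun _ => μ)) :=
    integrable_of_bdd hψc.aestronglyMeasurable (B := Metric.diam (Set.univ : Set M))
      (fun q => by simpa [hψ, Real.norm_eq_abs, abs_of_nonneg dist_nonneg]
        using dist_le_diam (M := M) _ _)
  calc Dfun μ (k+1) y y'
      = ∫ gs, ψ (e gs) ∂(Measure.pi fun _ => μ) := by
        unfold Dfun; exact integral_congr_ae (Filter.Eventually.of_forall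
          fun gs => (hcomp gs).symm)
    _ = ∫ q, ψ q ∂(μ.prod (Measure.pi fun _ => μ)) := hmp.integral_comp' ψ
    _ = ∫ g, ∫ gt, ψ (g, gt) ∂(Measure.pi fun _ => μ) ∂μ := integral_prod ψ hψi
    _ = ∫ g, Dfun μ k (g y) (g y') ∂μ := rfl

lemma Gseq_diff {h : M → ℝ} (hhc : Continuous h) {K : ℝ} (hKb : ∀ y, |h y| ≤ K)
    {L : NNReal} (hL : LipschitzWith L h) (k : ℕ) (y y' : M) :
    |Gseq μ h k y - Gseq μ h k y'| ≤ L * Dfun μ k y y' := by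
  induction k generalizing y y' with
  | zero =>
    rw [Dfun_zero]
    simpa [Gseq, Real.dist_eq] using hL.dist_le_mul y y'
  | succ k ih =>
    have hker := Gseq_cont_bdd μ hhc hKb k
    have hint : ∀ z : M, Integrable (fun g : C(M,M) => Gseq μ h k (g z)) μ :=
      fun z => integrable_of_bdd
        ((hker.1.comp (continuous_eval_const z)).aestronglyMeasurable)
        (fun g => by simpa [Real.norm_eq_abs] using hker.2 (g z))
    have hDint : Integrable (fun g : C(M,M) => (L:ℝ) * Dfun μ k (g y) (g y')) μ := by
      apply Integrable.const_mul
      refine integrable_of_bdd ?_ (B := Metric.diam (Set.univ : Set M)) ?_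
      · exact ((Dfun_cont μ k).comp ((continuous_eval_const y).prodMk
          (continuous_eval_const y'))).aestronglyMeasurable
      · intro g
        simpa [Real.norm_eq_abs, abs_of_nonneg (Dfun_nonneg μ k _ _)]
          using Dfun_le_diam μ k (g y) (g y')
    have heq : Gseq μ h (k+1) y - Gseq μ h (k+1) y'
        = ∫ g, (Gseq μ h k (g y) - Gseq μ h k (g y')) ∂μ :=
      (integral_sub (hint y) (hint y')).symm
    rw [heq, Dfun_succ]
    calc |∫ g, (Gseq μ h k (g y) - Gseq μ h k (g y')) ∂μ|
        ≤ ∫ g, |Gseq μ h k (g y) - Gseq μ h k (g y')| ∂μ := by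
          simpa [Real.norm_eq_abs] using
            norm_integral_le_integral_norm (μ := μ)
              (fun g : C(M,M) => Gseq μ h k (g y) - Gseq μ h k (g y'))
      _ ≤ ∫ g, (L:ℝ) * Dfun μ k (g y) (g y') ∂μ := by
          refine integral_mono ((hint y).sub (hint y')).abs hDint fun g => ?_
          exact ih _ _
      _ = L * ∫ g, Dfun μ k (g y) (g y') ∂μ := integral_const_mul _ _

end Aux

/-- Solution of the Poisson equation `(I - A)F = f` for contracting iterated
random maps: the series `∑ₖ Aᵏ f` converges uniformly to a continuous `F` with
zero mean. -/
theorem stmt_10 {M : Type*} [MetricSpace M] [CompactSpace M] [Nonempty M]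
    [MeasurableSpace M] [BorelSpace M]
    [MeasurableSpace C(M, M)] [BorelSpace C(M, M)]
    (μ : Measure C(M, M)) [IsProbabilityMeasure μ]
    (ν : Measure M) [IsProbabilityMeasure ν]
    (hinv : (μ.prod ν).map (fun p : C(M, M) × M => p.1 p.2) = ν)
    (huniq : ∀ ν' : Measure M, IsProbabilityMeasure ν' →
      (μ.prod ν').map (fun p : C(M, M) × M => p.1 p.2) = ν' → ν' = ν)
    (C : ℝ) (hC : 0 < C) (c : ℝ) (hc0 : 0 ≤ c) (hc1 : c < 1)
    (hcontr : ∀ (n : ℕ) (y y' : M),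
      (∫ gs : Fin n → C(M, M), dist (applyTuple gs y) (applyTuple gs y')
        ∂(Measure.pi fun _ => μ)) ≤ C * c ^ n)
    (f : C(M, M) × M → ℝ) (hfc : Continuous f)
    (hfb : ∃ K : ℝ, ∀ p, |f p| ≤ K)
    (hLip : ∃ L : NNReal, LipschitzWith L (fun y : M => ∫ g, f (g, y) ∂μ))
    (hmean : ∫ p, f p ∂(μ.prod ν) = 0) :
    ∃ F : C(M, M) × M → ℝ, Continuous F ∧
      TendstoUniformly
        (fun (n : ℕ) (p : C(M, M) × M) =>
          ∑ k ∈ Finset.range n, (Aop μ)^[k] f p) F atTop ∧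
      (∀ p, F p - Aop μ F p = f p) ∧
      ∫ p, F p ∂(μ.prod ν) = 0 := by
  classical
  obtain ⟨K, hK⟩ := hfb
  obtain ⟨L, hL⟩ := hLip
  set h : M → ℝ := fun y => ∫ g, f (g, y) ∂μ with hhdef
  have hhc : Continuous h := hL.continuous
  have hK0 : 0 ≤ K := (abs_nonneg _).trans (hK (ContinuousMap.id M, Classical.arbitrary M))
  have hevalc : Continuous fun p : C(M,M) × M => p.1 p.2 :=
    ContinuousEval.continuous_eval
  have hhb : ∀ y, |h y| ≤ K := by
    intro y
    have : ‖∫ g, f (g, y) ∂μ‖ ≤ K * (μ Set.univ).toReal :=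
      norm_integral_le_of_norm_le_const (Filter.Eventually.of_forall fun g => by
        simpa [Real.norm_eq_abs] using hK (g, y))
    simpa [hhdef, Real.norm_eq_abs] using this
  have hGk := Gseq_cont_bdd μ hhc hhb
  -- iterates of the Markov operator
  have hAiter : ∀ (k : ℕ) (p : C(M,M) × M),
      (Aop μ)^[k+1] f p = Gseq μ h k (p.1 p.2) := by
    intro k
    induction k with
    | zero => intro p; rfl
    | succ k ih =>
      intro p
      rw [Function.iterate_succ_apply']
      show ∫ g', (Aop μ)^[k+1] f (g', p.1 p.2) ∂μ = _
      simp only [ih]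
      rfl
  have hcontrD : ∀ (k : ℕ) (y y' : M), Dfun μ k y y' ≤ C * c ^ k :=
    fun k y y' => hcontr k y y'
  have hGsmall : ∀ (k : ℕ) (y y' : M),
      |Gseq μ h k y - Gseq μ h k y'| ≤ (L : ℝ) * C * c ^ k := by
    intro k y y'
    refine (Gseq_diff μ hhc hhb hL k y y').trans ?_
    rw [mul_assoc]
    exact mul_le_mul_of_nonneg_left (hcontrD k y y') L.coe_nonneg
  -- zero mean of the iterates
  have hfint : Integrable f (μ.prod ν) :=
    integrable_of_bdd hfc.aestronglyMeasurable
      (fun p => by simpa [Real.norm_eq_abs] using hK p)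
  have hGmean : ∀ k, ∫ y, Gseq μ h k y ∂ν = 0 := by
    intro k
    induction k with
    | zero =>
      have := integral_prod_symm f hfint
      rw [hmean] at this
      exact this.symm
    | succ k ih =>
      have hGint : Integrable (fun p : C(M,M) × M => Gseq μ h k (p.1 p.2))
          (μ.prod ν) :=
        integrable_of_bdd ((hGk k).1.comp hevalc).aestronglyMeasurable
          (fun p => by simpa [Real.norm_eq_abs] using (hGk k).2 (p.1 p.2))
      have h1 : ∫ y, Gseq μ h (k+1) y ∂ν
          = ∫ p, Gseq μ h k (p.1 p.2) ∂(μ.prod ν) :=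
        (integral_prod_symm (fun p : C(M,M) × M => Gseq μ h k (p.1 p.2)) hGint).symm
      have h2 : ∫ p, Gseq μ h k (p.1 p.2) ∂(μ.prod ν) = ∫ y, Gseq μ h k y ∂ν := by
        conv_rhs => rw [← hinv]
        exact (integral_map hevalc.aemeasurable
          (hGk k).1.aestronglyMeasurable).symm
      rw [h1, h2, ih]
  have hGbound : ∀ (k : ℕ) (y : M), |Gseq μ h k y| ≤ (L : ℝ) * C * c ^ k := by
    intro k y
    have hGint : Integrable (Gseq μ h k) ν :=
      integrable_of_bdd (hGk k).1.aestronglyMeasurable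
        (fun z => by simpa [Real.norm_eq_abs] using (hGk k).2 z)
    have heq : ∫ y', (Gseq μ h k y - Gseq μ h k y') ∂ν = Gseq μ h k y := by
      rw [integral_sub (integrable_const _) hGint, hGmean k, integral_const]
      simp
    rw [← heq]
    have : ‖∫ y', (Gseq μ h k y - Gseq μ h k y') ∂ν‖
        ≤ ((L : ℝ) * C * c ^ k) * (ν Set.univ).toReal :=
      norm_integral_le_of_norm_le_const (Filter.Eventually.of_forall fun y' => by
        simpa [Real.norm_eq_abs] using hGsmall k y y')
    simpa [Real.norm_eq_abs] using this
  -- the uniform bound on the iterates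
  set u : ℕ → ℝ := fun k => Nat.casesOn k K (fun j => (L : ℝ) * C * c ^ j) with hudef
  have hu0 : ∀ k, 0 ≤ u k := by
    intro k
    cases k with
    | zero => exact hK0
    | succ j => positivity
  have hu : Summable u := by
    rw [← summable_nat_add_iff 1]
    simpa [hudef] using
      (summable_geometric_of_lt_one hc0 hc1).mul_left ((L : ℝ) * C)
  have hbd : ∀ (k : ℕ) (p : C(M,M) × M), ‖(Aop μ)^[k] f p‖ ≤ u k := by
    intro k p
    cases k with
    | zero => exact (by simpa [Real.norm_eq_abs] using hK p : ‖f p‖ ≤ K)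
    | succ j =>
      rw [hAiter j p]
      simpa [Real.norm_eq_abs] using hGbound j (p.1 p.2)
  set F : C(M,M) × M → ℝ := fun p => ∑' k, (Aop μ)^[k] f p with hFdef
  have htu : TendstoUniformly
      (fun (n : ℕ) (p : C(M,M) × M) => ∑ k ∈ Finset.range n, (Aop μ)^[k] f p)
      F atTop := tendstoUniformly_tsum_nat hu hbd
  have hAc : ∀ k, Continuous ((Aop μ)^[k] f) := by
    intro k
    cases k with
    | zero => exact hfc
    | succ j =>
      have : (Aop μ)^[j+1] f = fun p => Gseq μ h j (p.1 p.2) :=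
        funext (hAiter j)
      rw [this]
      exact (hGk j).1.comp hevalc
  have hSc : ∀ n : ℕ, Continuous fun p : C(M,M) × M =>
      ∑ k ∈ Finset.range n, (Aop μ)^[k] f p :=
    fun n => continuous_finset_sum _ fun k _ => hAc k
  have hFc : Continuous F :=
    htu.continuous (Filter.Eventually.of_forall hSc).frequently
  -- uniform bound on partial sums
  set U : ℝ := ∑' k, u k with hUdef
  have hSU : ∀ (n : ℕ) (q : C(M,M) × M),
      ‖∑ k ∈ Finset.range n, (Aop μ)^[k] f q‖ ≤ U := by
    intro n q
    calc ‖∑ k ∈ Finset.range n, (Aop μ)^[k] f q‖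
        ≤ ∑ k ∈ Finset.range n, ‖(Aop μ)^[k] f q‖ := norm_sum_le _ _
      _ ≤ ∑ k ∈ Finset.range n, u k :=
          Finset.sum_le_sum fun k _ => hbd k q
      _ ≤ U := Summable.sum_le_tsum _ (fun k _ => hu0 k) hu
  have hptw : ∀ q : C(M,M) × M,
      Tendsto (fun n => ∑ k ∈ Finset.range n, (Aop μ)^[k] f q) atTop (𝓝 (F q)) :=
    fun q => htu.tendsto_at q
  -- the Poisson equation
  have hpoisson : ∀ p, F p - Aop μ F p = f p := by
    intro p
    have h1 : Tendsto
        (fun n => ∫ g', (∑ k ∈ Finset.range n, (Aop μ)^[k] f (g', p.1 p.2)) ∂μ)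
        atTop (𝓝 (∫ g', F (g', p.1 p.2) ∂μ)) := by
      refine tendsto_integral_of_dominated_convergence (fun _ => U) ?_ ?_ ?_ ?_
      · intro n
        exact ((hSc n).comp (continuous_id.prodMk continuous_const)).aestronglyMeasurable
      · exact integrable_const U
      · intro n
        exact Filter.Eventually.of_forall fun g' => hSU n (g', p.1 p.2)
      · exact Filter.Eventually.of_forall fun g' => hptw (g', p.1 p.2)
    have h2 : ∀ n : ℕ,
        ∫ g', (∑ k ∈ Finset.range n, (Aop μ)^[k] f (g', p.1 p.2)) ∂μ
          = (∑ k ∈ Finset.range (n+1), (Aop μ)^[k] f p) - f p := by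
      intro n
      have hintk : ∀ k : ℕ,
          Integrable (fun g' : C(M,M) => (Aop μ)^[k] f (g', p.1 p.2)) μ :=
        fun k => integrable_of_bdd
          (((hAc k).comp (continuous_id.prodMk continuous_const)).aestronglyMeasurable)
          (fun g' => hbd k (g', p.1 p.2))
      rw [integral_finset_sum _ fun k _ => hintk k]
      have hstep : ∀ k : ℕ,
          ∫ g', (Aop μ)^[k] f (g', p.1 p.2) ∂μ = (Aop μ)^[k+1] f p := by
        intro k
        rw [Function.iterate_succ_apply']
        rfl
      rw [Finset.sum_congr rfl fun k _ => hstep k]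
      have := Finset.sum_range_succ' (fun k => (Aop μ)^[k] f p) n
      rw [this]
      simp only [Function.iterate_zero_apply]
      ring
    have h3 : Tendsto
        (fun n => (∑ k ∈ Finset.range (n+1), (Aop μ)^[k] f p) - f p)
        atTop (𝓝 (F p - f p)) :=
      Tendsto.sub ((hptw p).comp (tendsto_add_atTop_nat 1)) tendsto_const_nhds
    have h4 : Aop μ F p = F p - f p := by
      have := tendsto_nhds_unique (by simpa [h2] using h1) h3
      exact this
    rw [h4]
    ring
  -- zero mean
  have hintAk : ∀ k, Integrable ((Aop μ)^[k] f) (μ.prod ν) :=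
    fun k => integrable_of_bdd (hAc k).aestronglyMeasurable (fun q => hbd k q)
  have hAmean : ∀ k, ∫ q, (Aop μ)^[k] f q ∂(μ.prod ν) = 0 := by
    intro k
    cases k with
    | zero => exact hmean
    | succ j =>
      have heq : ((Aop μ)^[j+1] f) = fun p : C(M,M) × M => Gseq μ h j (p.1 p.2) :=
        funext (hAiter j)
      rw [heq]
      have h2 : ∫ p, Gseq μ h j (p.1 p.2) ∂(μ.prod ν) = ∫ y, Gseq μ h j y ∂ν := by
        conv_rhs => rw [← hinv]
        exact (integral_map hevalc.aemeasurable
          (hGk j).1.aestronglyMeasurable).symm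
      rw [h2, hGmean j]
  have hmean0 : ∫ q, F q ∂(μ.prod ν) = 0 := by
    have h1 : Tendsto
        (fun n => ∫ q, (∑ k ∈ Finset.range n, (Aop μ)^[k] f q) ∂(μ.prod ν))
        atTop (𝓝 (∫ q, F q ∂(μ.prod ν))) := by
      refine tendsto_integral_of_dominated_convergence (fun _ => U) ?_ ?_ ?_ ?_
      · intro n; exact (hSc n).aestronglyMeasurable
      · exact integrable_const U
      · intro n; exact Filter.Eventually.of_forall fun q => hSU n q
      · exact Filter.Eventually.of_forall fun q => hptw q
    have h2 : ∀ n : ℕ,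
        ∫ q, (∑ k ∈ Finset.range n, (Aop μ)^[k] f q) ∂(μ.prod ν) = 0 := by
      intro n
      rw [integral_finset_sum _ fun k _ => hintAk k]
      simp [hAmean]
    have h0 : Tendsto
        (fun n => ∫ q, (∑ k ∈ Finset.range n, (Aop μ)^[k] f q) ∂(μ.prod ν))
        atTop (𝓝 (0:ℝ)) := by
      simpa [h2] using (tendsto_const_nhds :
        Tendsto (fun _ : ℕ => (0:ℝ)) atTop (𝓝 0))
    exact tendsto_nhds_unique h1 h0
  exact ⟨F, hFc, htu, hpoisson, hmean0⟩
end

section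
/- Let g be a self-map of a compact metric space M that is a contraction on M (there exist n ≥ 1 and 0 ≤ c < 1 with ρ(gⁿ·x, gⁿ·x') ≤ c·ρ(x, x') for all x, x'). Then g has a fixed point x_g in M, and if g lies in the support of the driving distribution μ of an i.i.d. iterated-function-system Markov chain y_{k+1} = g_k·y_k with invariant measure ν, then x_g belongs to the support of ν. -/
open MeasureTheory

private lemma approx_comp {M : Type*} [MetricSpace M] [CompactSpace M] (g : C(M, M)) :
    ∀ m : ℕ, ∀ ε > (0:ℝ), ∃ δ > (0:ℝ), ∀ fs : List C(M, M), fs.length = m →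
      (∀ f ∈ fs, ∀ x, dist (f x) (g x) < δ) →
      ∀ y, dist (fs.foldr (fun f z => f z) y) ((⇑g)^[m] y) < ε := by
  intro m
  induction m with
  | zero =>
    intro ε hε
    refine ⟨1, one_pos, fun fs hlen _ y => ?_⟩
    rw [List.length_eq_zero_iff.mp hlen]
    simpa using hε
  | succ m ih =>
    intro ε hε
    have hg : UniformContinuous g := CompactSpace.uniformContinuous_of_continuous g.continuous
    obtain ⟨δ₁, hδ₁, hδ₁'⟩ := Metric.uniformContinuous_iff.mp hg (ε/2) (by linarith)
    obtain ⟨δ₂, hδ₂, hδ₂'⟩ := ih δ₁ hδ₁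
    refine ⟨min (ε/2) δ₂, by positivity, ?_⟩
    intro fs hlen hfs y
    match fs with
    | f :: fs' =>
      have hlen' : fs'.length = m := by simpa using hlen
      have hz : dist (fs'.foldr (fun f z => f z) y) ((⇑g)^[m] y) < δ₁ :=
        hδ₂' fs' hlen' (fun f hf x => lt_of_lt_of_le (hfs f (List.mem_cons_of_mem _ hf) x)
          (min_le_right _ _)) y
      set z := fs'.foldr (fun f z => f z) y with hzdef
      have h1 : dist (f z) (g z) < ε/2 :=
        lt_of_lt_of_le (hfs f List.mem_cons_self z) (min_le_left _ _)
      have h2 : dist (g z) (g ((⇑g)^[m] y)) < ε/2 := hδ₁' hz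
      calc dist ((f :: fs').foldr (fun f z => f z) y) ((⇑g)^[m+1] y)
          = dist (f z) (g ((⇑g)^[m] y)) := by
            rw [Function.iterate_succ_apply']; rfl
        _ ≤ dist (f z) (g z) + dist (g z) (g ((⇑g)^[m] y)) := dist_triangle _ _ _
        _ < ε := by linarith

/-- A contracting map in the support of the driving distribution of an
iterated-function-system Markov chain has a fixed point, and this fixed point
lies in the support of every invariant measure `ν` of the chain. -/
theorem stmt_11 {M : Type*} [MetricSpace M] [CompactSpace M] [Nonempty M]
    [MeasurableSpace M] [BorelSpace M] [MeasurableSpace C(M, M)]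
    (g : C(M, M)) (n : ℕ) (hn : 1 ≤ n)
    (c : ℝ) (hc0 : 0 ≤ c) (hc1 : c < 1)
    (hcontr : ∀ x x' : M, dist ((⇑g)^[n] x) ((⇑g)^[n] x') ≤ c * dist x x')
    (μ : Measure C(M, M)) [IsProbabilityMeasure μ]
    (hsupp : ∀ ε > (0 : ℝ), 0 < μ {g' : C(M, M) | ∀ x, dist (g' x) (g x) < ε})
    (ν : Measure M) [IsProbabilityMeasure ν]
    (hinv : (μ.prod ν).map (fun p : C(M, M) × M => p.1 p.2) = ν) :
    ∃ x_g : M, g x_g = x_g ∧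
      ∀ U : Set M, IsOpen U → x_g ∈ U → 0 < ν U := by
  set h : M → M := (⇑g)^[n] with hh
  have hlip : LipschitzWith ⟨c, hc0⟩ h := LipschitzWith.of_dist_le_mul hcontr
  have hCW : ContractingWith ⟨c, hc0⟩ h := ⟨by exact_mod_cast hc1, hlip⟩
  set x_g := ContractingWith.fixedPoint h hCW with hxg
  have hfix : h x_g = x_g := hCW.fixedPoint_isFixedPt
  have hcomm : h (g x_g) = g (h x_g) := by
    rw [hh, ← Function.iterate_succ_apply, Function.iterate_succ_apply']
  have hgfix : g x_g = x_g := by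
    have hd : dist (g x_g) x_g ≤ c * dist (g x_g) x_g := by
      calc dist (g x_g) x_g = dist (h (g x_g)) (h x_g) := by rw [hcomm, hfix]
        _ ≤ c * dist (g x_g) x_g := hcontr _ _
    have hnn : (0:ℝ) ≤ dist (g x_g) x_g := dist_nonneg
    have : dist (g x_g) x_g = 0 := by nlinarith
    exact dist_eq_zero.mp this
  refine ⟨x_g, hgfix, ?_⟩
  intro U hU hxU
  obtain ⟨ε, hε, hball⟩ := Metric.isOpen_iff.mp hU x_g hxU
  -- iterate contraction estimate
  have hiter : ∀ k (x x' : M), dist (h^[k] x) (h^[k] x') ≤ c^k * dist x x' := by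
    intro k
    induction k with
    | zero => intro x x'; simp
    | succ k ih =>
      intro x x'
      calc dist (h^[k+1] x) (h^[k+1] x') = dist (h^[k] (h x)) (h^[k] (h x')) := by
            rw [Function.iterate_succ_apply, Function.iterate_succ_apply]
        _ ≤ c^k * dist (h x) (h x') := ih _ _
        _ ≤ c^k * (c * dist x x') :=
            mul_le_mul_of_nonneg_left (hcontr x x') (pow_nonneg hc0 k)
        _ = c^(k+1) * dist x x' := by ring
  obtain ⟨C, hC⟩ := Metric.isBounded_iff.mp (isCompact_univ (X := M)).isBounded
  have hD : ∀ y : M, dist y x_g ≤ max C 0 := fun y =>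
    le_trans (hC (Set.mem_univ _) (Set.mem_univ _)) (le_max_left _ _)
  have htend : Filter.Tendsto (fun k => c^k * (max C 0)) Filter.atTop (nhds 0) := by
    simpa using (tendsto_pow_atTop_nhds_zero_of_lt_one hc0 hc1).mul_const (max C 0)
  obtain ⟨k, hk⟩ := (htend.eventually_lt_const (by positivity : (0:ℝ) < ε/4)).exists
  obtain ⟨δ, hδ, hδ'⟩ := approx_comp g (n*k) (ε/4) (by positivity)
  set A' : Set C(M,M) := {g' | ∀ x, dist (g' x) (g x) ≤ δ/2} with hA'
  set B : Set M := Metric.closedBall x_g (ε/2) with hB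
  have hanal : ∀ (y : M) (fs : List C(M,M)), fs.length = n*k → (∀ f ∈ fs, f ∈ A') →
      fs.foldr (fun f z => f z) y ∈ B := by
    intro y fs hlen hmem
    have h1 : dist (fs.foldr (fun f z => f z) y) ((⇑g)^[n*k] y) < ε/4 :=
      hδ' fs hlen (fun f hf x => lt_of_le_of_lt (hmem f hf x) (by linarith)) y
    have h2 : dist ((⇑g)^[n*k] y) x_g < ε/4 := by
      have heq : (⇑g)^[n*k] y = h^[k] y := by rw [hh, ← Function.iterate_mul]
      rw [heq]
      have hfixk : h^[k] x_g = x_g := (Function.IsFixedPt.iterate hfix k)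
      calc dist (h^[k] y) x_g = dist (h^[k] y) (h^[k] x_g) := by rw [hfixk]
        _ ≤ c^k * dist y x_g := hiter k y x_g
        _ ≤ c^k * max C 0 := mul_le_mul_of_nonneg_left (hD y) (pow_nonneg hc0 k)
        _ < ε/4 := hk
    rw [hB, Metric.mem_closedBall]
    calc dist (fs.foldr (fun f z => f z) y) x_g
        ≤ dist (fs.foldr (fun f z => f z) y) ((⇑g)^[n*k] y)
          + dist ((⇑g)^[n*k] y) x_g := dist_triangle _ _ _
      _ ≤ ε/2 := by linarith
  -- measure-theoretic part
  have hf_ae : AEMeasurable (fun p : C(M,M) × M => p.1 p.2) (μ.prod ν) := by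
    by_contra hna
    rw [Measure.map_of_not_aemeasurable hna] at hinv
    have h1 : ν Set.univ = 1 := measure_univ
    rw [← hinv] at h1
    simp at h1
  have key : ∀ S : Set M, MeasurableSet S →
      ν S = (μ.prod ν) ((fun p : C(M,M) × M => p.1 p.2) ⁻¹' S) := by
    intro S hS
    conv_lhs => rw [← hinv]
    exact Measure.map_apply_of_aemeasurable hf_ae hS
  have hmuA : 0 < μ A' := by
    refine lt_of_lt_of_le (hsupp (δ/2) (by linarith)) (measure_mono ?_)
    intro g' hg' x
    exact (hg' x).le
  have main : ∀ j : ℕ, ∃ K : Set M, IsClosed K ∧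
      (∀ y : M, (∀ fs : List C(M,M), fs.length = j → (∀ f ∈ fs, f ∈ A') →
        fs.foldr (fun f z => f z) y ∈ B) → y ∈ K) ∧
      (μ A')^j * ν K ≤ ν B := by
    intro j
    induction j with
    | zero =>
      refine ⟨B, Metric.isClosed_closedBall, fun y hy => ?_, by simp⟩
      have := hy [] rfl (fun f hf => absurd hf List.not_mem_nil)
      simpa using this
    | succ j ih =>
      obtain ⟨K, hKc, hKmem, hKmeas⟩ := ih
      refine ⟨⋂ g' ∈ A', g' ⁻¹' K,
        isClosed_biInter (fun g' _ => hKc.preimage g'.continuous), ?_, ?_⟩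
      · intro y hy
        refine Set.mem_iInter₂.mpr (fun g' hg' => ?_)
        apply hKmem
        intro fs hlen hmem
        have heq : fs.foldr (fun f z => f z) (g' y) = (fs ++ [g']).foldr (fun f z => f z) y := by
          simp [List.foldr_append]
        rw [heq]
        refine hy (fs ++ [g']) (by simp [hlen]) ?_
        intro f hf
        rcases List.mem_append.mp hf with hf' | hf'
        · exact hmem f hf'
        · simp at hf'; rwa [hf']
      · have hsub : A' ×ˢ (⋂ g' ∈ A', g' ⁻¹' K) ⊆ (fun p : C(M,M) × M => p.1 p.2) ⁻¹' K := by
          rintro ⟨g', y⟩ ⟨hg', hy⟩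
          exact Set.mem_iInter₂.mp hy g' hg'
        have h1 : μ A' * ν (⋂ g' ∈ A', g' ⁻¹' K) ≤ ν K := by
          rw [← Measure.prod_prod, key K hKc.measurableSet]
          exact measure_mono hsub
        calc (μ A')^(j+1) * ν (⋂ g' ∈ A', g' ⁻¹' K)
            = (μ A')^j * (μ A' * ν (⋂ g' ∈ A', g' ⁻¹' K)) := by ring
          _ ≤ (μ A')^j * ν K := mul_le_mul_right h1 _
          _ ≤ ν B := hKmeas
  obtain ⟨K, hKc, hKmem, hKmeas⟩ := main (n*k)
  have hKuniv : K = Set.univ :=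
    Set.eq_univ_of_forall (fun y => hKmem y (fun fs hlen hmem => hanal y fs hlen hmem))
  have hνB : 0 < ν B := by
    rw [hKuniv] at hKmeas
    simp only [measure_univ, mul_one] at hKmeas
    exact lt_of_lt_of_le (ENNReal.pow_pos hmuA _) hKmeas
  refine lt_of_lt_of_le hνB (measure_mono ?_)
  exact (Metric.closedBall_subset_ball (by linarith)).trans hball
end

section
/- Let M₀ be a minimal set for a semigroup B of Lipschitz self-maps of a compact metric space M (i.e., the orbit {g·x : g ∈ B} of every x ∈ M₀ is dense in M₀). Suppose some ĝ ∈ B is a contraction on M₀ with contraction constant c < 1 and fixed point x̂ ∈ M₀. Then the set of fixed points in M₀ of elements of B, Fix_{M₀}(B) = {x ∈ M₀ : ∃ g ∈ B, g·x = x}, is dense in M₀. -/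
open scoped NNReal

/-- In a minimal set `M₀` for a semigroup `S` of Lipschitz self-maps of a
compact metric space, if some element of `S` contracts `M₀`, then fixed
points of elements of `S` are dense in `M₀`. -/
theorem stmt_12 {M : Type*} [MetricSpace M] [CompactSpace M]
    (S : Set (M → M))
    (hsemigroup : ∀ g ∈ S, ∀ h ∈ S, g ∘ h ∈ S)
    (hLip : ∀ g ∈ S, ∃ L : ℝ≥0, LipschitzWith L g)
    (M₀ : Set M) (hM₀closed : IsClosed M₀) (hM₀ne : M₀.Nonempty)
    (hinvar : ∀ g ∈ S, ∀ x ∈ M₀, g x ∈ M₀)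
    (hmin : ∀ x ∈ M₀, M₀ ⊆ closure {y | ∃ g ∈ S, g x = y})
    (g0 : M → M) (hg0 : g0 ∈ S)
    (c : ℝ) (hc0 : 0 ≤ c) (hc1 : c < 1)
    (hcontr : ∀ x ∈ M₀, ∀ y ∈ M₀, dist (g0 x) (g0 y) ≤ c * dist x y)
    (xhat : M) (hxhat : xhat ∈ M₀) (hfix : g0 xhat = xhat) :
    M₀ ⊆ closure {x | x ∈ M₀ ∧ ∃ g ∈ S, g x = x} := by
  -- basic facts about iterates of g0
  have hiter_mem : ∀ n : ℕ, ∀ x ∈ M₀, g0^[n] x ∈ M₀ := by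
    intro n
    induction n with
    | zero => intro x hx; simpa using hx
    | succ n ih =>
      intro x hx
      rw [Function.iterate_succ']
      exact hinvar g0 hg0 _ (ih x hx)
  have hiter_contr : ∀ n : ℕ, ∀ x ∈ M₀, ∀ y ∈ M₀,
      dist (g0^[n] x) (g0^[n] y) ≤ c ^ n * dist x y := by
    intro n
    induction n with
    | zero => intro x hx y hy; simp
    | succ n ih =>
      intro x hx y hy
      rw [Function.iterate_succ', pow_succ]
      calc dist (g0 (g0^[n] x)) (g0 (g0^[n] y))
          ≤ c * dist (g0^[n] x) (g0^[n] y) :=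
            hcontr _ (hiter_mem n x hx) _ (hiter_mem n y hy)
        _ ≤ c * (c ^ n * dist x y) := by
            exact mul_le_mul_of_nonneg_left (ih x hx y hy) hc0
        _ = c ^ n * c * dist x y := by ring
  have hiter_S : ∀ n : ℕ, 1 ≤ n → g0^[n] ∈ S := by
    intro n
    induction n with
    | zero => intro h; omega
    | succ n ih =>
      intro _
      rcases Nat.eq_zero_or_pos n with h0 | h1
      · subst h0; simpa using hg0
      · rw [Function.iterate_succ']
        exact hsemigroup g0 hg0 _ (ih h1)
  have hiter_fix : ∀ n : ℕ, g0^[n] xhat = xhat := fun n =>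
    Function.iterate_fixed hfix n
  -- completeness of M₀
  haveI : CompleteSpace ↥M₀ := hM₀closed.completeSpace_coe
  haveI : Nonempty ↥M₀ := ⟨⟨xhat, hxhat⟩⟩
  -- diameter bound
  set D : ℝ := Metric.diam (Set.univ : Set M) with hD
  have hDnn : 0 ≤ D := Metric.diam_nonneg
  have hdistD : ∀ x y : M, dist x y ≤ D := fun x y =>
    Metric.dist_le_diam_of_mem isCompact_univ.isBounded trivial trivial
  -- main argument
  intro z hz
  rw [Metric.mem_closure_iff]
  intro ε hε
  -- find an orbit point of xhat close to z
  have hz' := hmin xhat hxhat hz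
  rw [Metric.mem_closure_iff] at hz'
  obtain ⟨w, ⟨g, hgS, hgw⟩, hwz⟩ := hz' (ε / 2) (by linarith)
  obtain ⟨L, hL⟩ := hLip g hgS
  set Lr : ℝ := (L : ℝ) with hLr
  have hLr0 : 0 ≤ Lr := L.coe_nonneg
  -- choose n large
  have hδpos : 0 < min (1 / (Lr + 1)) (ε / (2 * (Lr + 1) * (D + 1))) := by
    apply lt_min <;> positivity
  obtain ⟨n, hn1, hn2⟩ : ∃ n : ℕ, 1 ≤ n ∧
      c ^ n < min (1 / (Lr + 1)) (ε / (2 * (Lr + 1) * (D + 1))) := by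
    have ht := tendsto_pow_atTop_nhds_zero_of_lt_one hc0 hc1
    have := (ht.eventually (gt_mem_nhds hδpos)).and (Filter.eventually_ge_atTop 1)
    obtain ⟨n, h1, h2⟩ := this.exists
    exact ⟨n, h2, h1⟩
  have hcn0 : 0 ≤ c ^ n := pow_nonneg hc0 n
  have hA : (Lr + 1) * c ^ n < 1 := by
    have := lt_of_lt_of_le hn2 (min_le_left _ _)
    rw [lt_div_iff₀ (by positivity)] at this
    linarith
  have hk1 : Lr * c ^ n < 1 := by nlinarith
  have hB : Lr * c ^ n * D < ε / 2 := by
    have h2 := lt_of_lt_of_le hn2 (min_le_right _ _)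
    rw [lt_div_iff₀ (by positivity)] at h2
    nlinarith
  -- the contracting map on M₀
  set f : ↥M₀ → ↥M₀ := fun x =>
    ⟨g (g0^[n] (x : M)), hinvar g hgS _ (hiter_mem n _ x.2)⟩ with hf
  set K : ℝ≥0 := L * (Real.toNNReal c) ^ n with hK
  have hKcoe : (K : ℝ) = Lr * c ^ n := by
    rw [hK]; push_cast [Real.coe_toNNReal c hc0]; rfl
  have hlipf : LipschitzWith K f := by
    apply LipschitzWith.of_dist_le_mul
    intro x y
    have h1 : dist (f x) (f y) = dist (g (g0^[n] (x : M))) (g (g0^[n] (y : M))) :=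
      Subtype.dist_eq _ _
    rw [h1, hKcoe]
    calc dist (g (g0^[n] (x : M))) (g (g0^[n] (y : M)))
        ≤ Lr * dist (g0^[n] (x : M)) (g0^[n] (y : M)) := hL.dist_le_mul _ _
      _ ≤ Lr * (c ^ n * dist (x : M) (y : M)) :=
          mul_le_mul_of_nonneg_left (hiter_contr n _ x.2 _ y.2) hLr0
      _ = Lr * c ^ n * dist x y := by rw [Subtype.dist_eq]; ring
  have hC : ContractingWith K f := by
    refine ⟨?_, hlipf⟩
    rw [← NNReal.coe_lt_coe, hKcoe]
    simpa using hk1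
  set p : ↥M₀ := hC.fixedPoint f with hp
  have hpfix : f p = p := hC.fixedPoint_isFixedPt
  have hpfix' : g (g0^[n] (p : M)) = (p : M) := congrArg Subtype.val hpfix
  refine ⟨(p : M), ⟨p.2, g ∘ g0^[n], hsemigroup g hgS _ (hiter_S n hn1), hpfix'⟩, ?_⟩
  -- distance estimate
  have hkey : dist w (p : M) < ε / 2 := by
    have hw : w = g (g0^[n] xhat) := by rw [hiter_fix n, hgw]
    calc dist w (p : M) = dist (g (g0^[n] xhat)) (g (g0^[n] (p : M))) := by
          rw [← hw, hpfix']
      _ ≤ Lr * dist (g0^[n] xhat) (g0^[n] (p : M)) := hL.dist_le_mul _ _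
      _ ≤ Lr * (c ^ n * dist xhat (p : M)) :=
          mul_le_mul_of_nonneg_left (hiter_contr n _ hxhat _ p.2) hLr0
      _ = Lr * c ^ n * dist xhat (p : M) := by ring
      _ ≤ Lr * c ^ n * D :=
          mul_le_mul_of_nonneg_left (hdistD _ _) (by positivity)
      _ < ε / 2 := hB
  calc dist z (p : M) ≤ dist z w + dist w (p : M) := dist_triangle _ _ _
    _ < ε / 2 + ε / 2 := add_lt_add hwz hkey
    _ = ε := by ring
end
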